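/- Let E be a Dedekind complete Riesz space with weak order unit e, F a strictly positive order continuous linear projection on E with F(e) = e (a conditional expectation), and φ a positive order continuous linear functional on E with φ(e) = 1; set p(X) = φ(F(|X|)). Let X ≥ 0 in E and (P_t)_{t≥0} a family of band projections on E. Then for every ε > 0 there exists δ > 0 such that whenever p(P_t e) < δ we have p(P_t X) < ε. -/

import Mathlib

variable {E : Type*} [AddCommGroup E] [Lattice E]
  [CovariantClass E E (· + ·) (· ≤ ·)] [Module ℝ E]

/-- `E` is Dedekind complete. -/
def DedekindComplete (E : Type*) [AddCommGroup E] [Lattice E] : Prop :=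
  ∀ A : Set E, A.Nonempty → BddAbove A → ∃ s, IsLUB A s

/-- `e` is a weak order unit. -/
def IsWeakUnit (e : E) : Prop :=
  0 < e ∧ ∀ x : E, 0 ≤ x → IsLUB (Set.range fun n : ℕ => x ⊓ n • e) x

/-- A band (order) projection. -/
def IsBandProj (P : E →ₗ[ℝ] E) : Prop :=
  (∀ x, P (P x) = P x) ∧ ∀ x : E, 0 ≤ x → 0 ≤ P x ∧ P x ≤ x

/-- A conditional expectation with respect to the weak order unit `e`: a strictly
positive, (sequentially) order continuous linear projection fixing `e`. -/
def IsCondExp (e : E) (F : E →ₗ[ℝ] E) : Prop :=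
  (∀ x, F (F x) = F x) ∧ (∀ x : E, 0 < x → 0 < F x) ∧ F e = e ∧
  ∀ V : ℕ → E, Antitone V → IsGLB (Set.range V) 0 →
    IsGLB (Set.range fun n => F (V n)) 0

/-- A positive, normalized, (sequentially) order continuous functional. -/
def IsNormedFunctional (e : E) (φ : E →ₗ[ℝ] ℝ) : Prop :=
  (∀ x : E, 0 ≤ x → 0 ≤ φ x) ∧ φ e = 1 ∧
  ∀ V : ℕ → E, Antitone V → IsGLB (Set.range V) 0 →
    Filter.Tendsto (fun n => φ (V n)) Filter.atTop (nhds 0)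

/-- For `0 ≤ X` and a family of band projections `(P t)`, given `ε > 0` there is `δ > 0`
such that `p_φ(P_t e) < δ` implies `p_φ(P_t X) < ε`, where `p_φ = φ ∘ F ∘ |·|`. -/
theorem small_on_unit_implies_small
    (hE : DedekindComplete E) (e : E) (he : IsWeakUnit e)
    (F : E →ₗ[ℝ] E) (hF : IsCondExp e F)
    (φ : E →ₗ[ℝ] ℝ) (hφ : IsNormedFunctional e φ)
    (X : E) (hX : 0 ≤ X)
    (P : ℝ → (E →ₗ[ℝ] E)) (hP : ∀ t : ℝ, 0 ≤ t → IsBandProj (P t)) :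
    ∀ ε > 0, ∃ δ > 0, ∀ t : ℝ, 0 ≤ t →
      φ (F |P t e|) < δ → φ (F |P t X|) < ε := by
  intro ε hε
  -- F is positive (monotone)
  have hFpos : ∀ x : E, 0 ≤ x → 0 ≤ F x := by
    intro x hx
    rcases hx.lt_or_eq with h | h
    · exact (hF.2.1 x h).le
    · rw [← h, map_zero]
  have hFmono : ∀ x y : E, x ≤ y → F x ≤ F y := by
    intro x y hxy
    have h := hFpos (y - x) (sub_nonneg.mpr hxy)
    rw [map_sub] at h
    exact sub_nonneg.mp h
  have hφmono : ∀ x y : E, x ≤ y → φ x ≤ φ y := by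
    intro x y hxy
    have h := hφ.1 (y - x) (sub_nonneg.mpr hxy)
    rw [map_sub] at h
    linarith
  -- the decreasing sequence V n = X - X ⊓ n • e
  set V : ℕ → E := fun n => X - X ⊓ n • e with hV
  have hVnonneg : ∀ n, 0 ≤ V n := fun n => sub_nonneg.mpr inf_le_left
  have hVanti : Antitone V := by
    intro m n hmn
    have : (m : ℕ) • e ≤ n • e := nsmul_le_nsmul_left he.1.le hmn
    exact sub_le_sub_left (inf_le_inf_left X this) X
  have hVglb : IsGLB (Set.range V) 0 := by
    constructor
    · rintro _ ⟨n, rfl⟩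
      exact hVnonneg n
    · intro b hb
      have hub : X - b ∈ upperBounds (Set.range fun n : ℕ => X ⊓ n • e) := by
        rintro _ ⟨n, rfl⟩
        have := hb ⟨n, rfl⟩
        have : b ≤ X - X ⊓ n • e := this
        have := sub_le_sub_left this X
        simpa using this
      have := (he.2 X hX).2 hub
      have : X ≤ X - b := this
      have : b ≤ 0 := by
        have := sub_le_sub_left this X
        simpa using this
      exact this
  -- F (V n) is antitone with inf 0
  have hFVanti : Antitone fun n => F (V n) := fun m n h => hFmono _ _ (hVanti h)
  have hFVglb : IsGLB (Set.range fun n => F (V n)) 0 := hF.2.2.2 V hVanti hVglb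
  have htend := hφ.2.2 _ hFVanti hFVglb
  -- choose N with φ (F (V N)) < ε/2
  have hε2 : (0:ℝ) < ε / 2 := by linarith
  obtain ⟨N, hN⟩ := (Metric.tendsto_atTop.mp htend (ε / 2) hε2) |>.imp
    (fun N h => h N le_rfl)
  have hNsmall : φ (F (V N)) < ε / 2 := by
    have := hN
    rw [Real.dist_eq, sub_zero] at this
    have hnn : 0 ≤ φ (F (V N)) := hφ.1 _ (hFpos _ (hVnonneg N))
    rwa [abs_of_nonneg hnn] at this
  refine ⟨ε / (2 * (N + 1)), by positivity, fun t ht hδ => ?_⟩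
  obtain ⟨hPproj, hPpos⟩ := hP t ht
  have hPmono : ∀ x y : E, x ≤ y → P t x ≤ P t y := by
    intro x y hxy
    have h := (hPpos (y - x) (sub_nonneg.mpr hxy)).1
    rw [map_sub] at h
    exact sub_nonneg.mp h
  have hPe : 0 ≤ P t e := (hPpos e he.1.le).1
  have hPX : 0 ≤ P t X := (hPpos X hX).1
  rw [abs_of_nonneg hPe] at hδ
  rw [abs_of_nonneg hPX]
  -- key estimate : P t X ≤ V N + N • P t e
  have hkey : P t X ≤ V N + (N : ℕ) • P t e := by
    have h1 : P t X = P t (V N) + P t (X ⊓ N • e) := by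
      rw [← map_add]
      congr 1
      simp [hV]
    have h2 : P t (V N) ≤ V N := (hPpos _ (hVnonneg N)).2
    have h3 : P t (X ⊓ N • e) ≤ N • P t e := by
      have := hPmono _ _ (inf_le_right : X ⊓ N • e ≤ N • e)
      rwa [map_nsmul] at this
    rw [h1]
    exact add_le_add h2 h3
  have hmain : φ (F (P t X)) ≤ φ (F (V N)) + (N : ℝ) * φ (F (P t e)) := by
    have := hφmono _ _ (hFmono _ _ hkey)
    rw [map_add, map_add, map_nsmul, map_nsmul, nsmul_eq_mul] at this
    exact this
  have hφFPe : 0 ≤ φ (F (P t e)) := hφ.1 _ (hFpos _ hPe)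
  have hNbound : (N : ℝ) * φ (F (P t e)) < ε / 2 := by
    calc (N : ℝ) * φ (F (P t e)) ≤ (N + 1 : ℝ) * φ (F (P t e)) := by
          apply mul_le_mul_of_nonneg_right _ hφFPe
          linarith [Nat.cast_nonneg (α := ℝ) N]
      _ < (N + 1 : ℝ) * (ε / (2 * (N + 1))) := by
          apply mul_lt_mul_of_pos_left hδ
          positivity
      _ = ε / 2 := by
          field_simp
  linarith
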